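/- Let F be a field and consider matrices over F(t) with the valuation ν_∞ (degree valuation at infinity) and ν₀ (order at zero). Suppose M = (a b; c d) ∈ SL₂(F[t,t⁻¹]) and n ≥ 1 is an integer such that all entries of M·diag(tⁿ, t⁻ⁿ) have ν_∞-value ≥ L and all entries of M·diag(t⁻ⁿ, tⁿ) have ν₀-value ≥ L, for some fixed L with n ≥ 1 − L. Then a = 0 and c = 0, contradicting det M = 1; hence no such M exists for n ≥ 1 − L. -/

import Mathlib

open RatFunc Polynomial

/- The valuation at infinity on `F(t)`: `ν_∞(p/q) = deg q - deg p`, with `ν_∞ 0 = ⊤`. -/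
open Classical in
noncomputable def nuInf {F : Type*} [Field F] (x : RatFunc F) : WithTop ℤ :=
  if x = 0 then ⊤ else (-(x.intDegree) : ℤ)

/- The valuation at zero on `F(t)`: the order of vanishing at `t = 0`, with `ν₀ 0 = ⊤`. -/
open Classical in
noncomputable def nuZero {F : Type*} [Field F] (x : RatFunc F) : WithTop ℤ :=
  if x = 0 then ⊤
  else ((x.num.rootMultiplicity 0 : ℤ) - (x.denom.rootMultiplicity 0 : ℤ) : ℤ)

open Matrix
open scoped MatrixGroups

set_option synthInstance.maxHeartbeats 1000000

/-- The canonical embedding of the Laurent polynomial ring `F[t,t⁻¹]` into the rational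
function field `F(t)`, sending `T` to `X`. -/
noncomputable def laurentToRatFunc (F : Type*) [Field F] :
    LaurentPolynomial F →ₐ[F] RatFunc F :=
  (AddMonoidAlgebra.lift F (RatFunc F) ℤ)
    ((Units.coeHom (RatFunc F)).comp
      ((zpowersHom (RatFunc F)ˣ) (Units.mk0 RatFunc.X RatFunc.X_ne_zero)))

/-- The subgroup `SL₂(F[t,t⁻¹])` of `SL₂(F(t))`. -/
noncomputable def laurentSL2 (F : Type*) [Field F] : Subgroup (SL(2, RatFunc F)) :=
  (Matrix.SpecialLinearGroup.map (laurentToRatFunc F).toRingHom).range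

/-- The diagonal matrix `diag(tᵏ, t⁻ᵏ)` over `F(t)`. -/
noncomputable def diagT (F : Type*) [Field F] (k : ℤ) :
    Matrix (Fin 2) (Fin 2) (RatFunc F) :=
  !![RatFunc.X ^ k, 0; 0, RatFunc.X ^ (-k)]

section Aux

variable {F : Type*} [Field F]

/-- order at zero as an integer (junk value `0` at `x = 0`). -/
noncomputable def nzAux (x : RatFunc F) : ℤ :=
  (x.num.rootMultiplicity 0 : ℤ) - (x.denom.rootMultiplicity 0 : ℤ)

lemma nzAux_mul {x y : RatFunc F} (hx : x ≠ 0) (hy : y ≠ 0) :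
    nzAux (x * y) = nzAux x + nzAux y := by
  have h : algebraMap F[X] (RatFunc F) ((x*y).num) / algebraMap _ _ ((x*y).denom)
      = (algebraMap _ _ (x.num * y.num)) / algebraMap _ _ (x.denom * y.denom) := by
    rw [num_div_denom, _root_.map_mul, _root_.map_mul, ← div_mul_div_comm, num_div_denom, num_div_denom]
  rw [div_eq_div_iff (RatFunc.algebraMap_ne_zero (x*y).denom_ne_zero)
    (RatFunc.algebraMap_ne_zero (mul_ne_zero x.denom_ne_zero y.denom_ne_zero)),
    ← _root_.map_mul, ← _root_.map_mul] at h
  have key := (RatFunc.algebraMap_injective F) h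
  have hxy : x * y ≠ 0 := mul_ne_zero hx hy
  have hnum : ∀ z : RatFunc F, z ≠ 0 → z.num ≠ 0 := fun z hz => RatFunc.num_ne_zero hz
  have e1 : ((x*y).num * (x.denom * y.denom)).rootMultiplicity 0
      = (x.num * y.num * (x*y).denom).rootMultiplicity 0 := by rw [key]
  rw [Polynomial.rootMultiplicity_mul (by
        exact mul_ne_zero (hnum _ hxy) (mul_ne_zero x.denom_ne_zero y.denom_ne_zero)),
      Polynomial.rootMultiplicity_mul (mul_ne_zero x.denom_ne_zero y.denom_ne_zero),
      Polynomial.rootMultiplicity_mul (by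
        exact mul_ne_zero (mul_ne_zero (hnum _ hx) (hnum _ hy)) (x*y).denom_ne_zero),
      Polynomial.rootMultiplicity_mul (mul_ne_zero (hnum _ hx) (hnum _ hy))] at e1
  unfold nzAux
  omega

lemma nzAux_inv (x : RatFunc F) : nzAux x⁻¹ = - nzAux x := by
  rcases eq_or_ne x 0 with rfl | hx
  · simp [nzAux, Polynomial.rootMultiplicity_eq_zero]
  · have := nzAux_mul hx (inv_ne_zero hx)
    rw [mul_inv_cancel₀ hx] at this
    have h1 : nzAux (1 : RatFunc F) = 0 := by
      simp [nzAux, Polynomial.rootMultiplicity_eq_zero]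
    omega

lemma nzAux_X : nzAux (RatFunc.X : RatFunc F) = 1 := by
  unfold nzAux
  rw [RatFunc.num_X, RatFunc.denom_X]
  have : Polynomial.rootMultiplicity (0:F) Polynomial.X = 1 := by
    have := Polynomial.rootMultiplicity_X_sub_C_self (R := F) (x := 0)
    simpa using this
  simp [this, Polynomial.rootMultiplicity_eq_zero]

lemma nzAux_pow (k : ℕ) : nzAux ((RatFunc.X : RatFunc F) ^ k) = k := by
  induction k with
  | zero => simp [nzAux, Polynomial.rootMultiplicity_eq_zero]
  | succ m ih =>
    rw [pow_succ, nzAux_mul (pow_ne_zero _ RatFunc.X_ne_zero) RatFunc.X_ne_zero, ih, nzAux_X]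
    push_cast; ring

lemma laurent_T (k : ℤ) :
    laurentToRatFunc F (LaurentPolynomial.T k) = RatFunc.X ^ k := by
  unfold laurentToRatFunc LaurentPolynomial.T
  rw [AddMonoidAlgebra.lift_single]
  simp

lemma laurent_toLaurent (p : Polynomial F) :
    laurentToRatFunc F (p.toLaurent) = algebraMap (Polynomial F) (RatFunc F) p := by
  have : (laurentToRatFunc F).comp Polynomial.toLaurentAlg
      = IsScalarTower.toAlgHom F (Polynomial F) (RatFunc F) := by
    apply Polynomial.algHom_ext
    simp [Polynomial.toLaurentAlg_apply, Polynomial.toLaurent_X]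
    rw [show LaurentPolynomial.T 1 = LaurentPolynomial.T (1:ℤ) from rfl, laurent_T]
    simp [RatFunc.algebraMap_X]
  have h2 := congrArg (fun g => g p) (congrArg DFunLike.coe this)
  simpa [Polynomial.toLaurentAlg_apply] using h2

lemma intDegree_pow_X (m : ℕ) : ((RatFunc.X : RatFunc F) ^ m).intDegree = m := by
  induction m with
  | zero => simpa using RatFunc.intDegree_polynomial (K := F) (p := 1)
  | succ k ih =>
    rw [pow_succ, RatFunc.intDegree_mul (pow_ne_zero _ RatFunc.X_ne_zero) RatFunc.X_ne_zero,
      ih, RatFunc.intDegree_X]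
    push_cast; ring

lemma nzAux_le_intDegree (f : LaurentPolynomial F) (h : laurentToRatFunc F f ≠ 0) :
    nzAux (laurentToRatFunc F f) ≤ (laurentToRatFunc F f).intDegree := by
  obtain ⟨m, p, hp⟩ := f.exists_T_pow
  set x := laurentToRatFunc F f with hx
  have key : algebraMap (Polynomial F) (RatFunc F) p = x * RatFunc.X ^ m := by
    rw [← laurent_toLaurent, hp, _root_.map_mul, laurent_T]
    norm_cast
  have hp0 : p ≠ 0 := by
    intro h0
    rw [h0, map_zero] at key
    exact (mul_ne_zero h (pow_ne_zero _ RatFunc.X_ne_zero)) key.symm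
  have hnz : nzAux (algebraMap (Polynomial F) (RatFunc F) p) = p.rootMultiplicity 0 := by
    unfold nzAux
    rw [RatFunc.num_algebraMap, RatFunc.denom_algebraMap]
    simp [Polynomial.rootMultiplicity_eq_zero]
  have hid : (algebraMap (Polynomial F) (RatFunc F) p).intDegree = p.natDegree :=
    RatFunc.intDegree_polynomial
  rw [key, nzAux_mul h (pow_ne_zero _ RatFunc.X_ne_zero), nzAux_pow] at hnz
  rw [key, RatFunc.intDegree_mul h (pow_ne_zero _ RatFunc.X_ne_zero), intDegree_pow_X] at hid
  have hrm : p.rootMultiplicity 0 ≤ p.natDegree := by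
    have hdvd := Polynomial.pow_rootMultiplicity_dvd p 0
    have := Polynomial.natDegree_le_of_dvd hdvd hp0
    simpa using this
  omega

lemma nuZero_eq (x : RatFunc F) (hx : x ≠ 0) : nuZero x = (nzAux x : WithTop ℤ) := by
  rw [nuZero, if_neg hx]; rfl

lemma nuInf_eq (x : RatFunc F) (hx : x ≠ 0) : nuInf x = ((-(x.intDegree) : ℤ) : WithTop ℤ) := by
  rw [nuInf, if_neg hx]

end Aux

/-- There is no `M ∈ SL₂(F[t,t⁻¹])` such that all entries of `M·diag(tⁿ,t⁻ⁿ)` have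
`ν_∞`-value at least `L` and all entries of `M·diag(t⁻ⁿ,tⁿ)` have `ν₀`-value at least `L`,
once `n ≥ 1 - L` (for `n ≥ 1`): any such `M` would have `a = 0` and `c = 0`, contradicting
`det M = 1`. -/
theorem stmt_10 {F : Type*} [Field F] (L : ℤ) (n : ℕ) (hn1 : 1 ≤ n)
    (hn : (n : ℤ) ≥ 1 - L) :
    ¬ ∃ M ∈ laurentSL2 F,
      (∀ i j, (L : WithTop ℤ) ≤ nuInf (((M : SL(2, RatFunc F)).1 * diagT F n) i j)) ∧
      (∀ i j, (L : WithTop ℤ) ≤ nuZero (((M : SL(2, RatFunc F)).1 * diagT F (-n)) i j)) := by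
  rintro ⟨M, hM, h1, h2⟩
  obtain ⟨N, hN⟩ := hM
  have hXn : ((RatFunc.X : RatFunc F) ^ n) ≠ 0 := pow_ne_zero _ RatFunc.X_ne_zero
  have entry : ∀ i j, (M : SL(2, RatFunc F)).1 i j = laurentToRatFunc F ((N : Matrix (Fin 2) (Fin 2) (LaurentPolynomial F)) i j) := by
    intro i j
    rw [← hN]
    rfl
  have col0 : ∀ i, (M : SL(2, RatFunc F)).1 i 0 = 0 := by
    intro i
    by_contra ha
    set a : RatFunc F := (M : SL(2, RatFunc F)).1 i 0 with haa
    -- entries of the products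
    have e1 : ((M : SL(2, RatFunc F)).1 * diagT F n) i 0 = a * RatFunc.X ^ n := by
      simp [diagT, Matrix.mul_apply, Fin.sum_univ_succ, zpow_natCast]
      exact Or.inl haa.symm
    have e2 : ((M : SL(2, RatFunc F)).1 * diagT F (-n)) i 0 = a * (RatFunc.X ^ n)⁻¹ := by
      simp [diagT, Matrix.mul_apply, Fin.sum_univ_succ, _root_.zpow_neg, zpow_natCast]
      exact Or.inl haa.symm
    have hx1 : a * RatFunc.X ^ n ≠ 0 := mul_ne_zero ha hXn
    have hx2 : a * (RatFunc.X ^ n)⁻¹ ≠ 0 := mul_ne_zero ha (inv_ne_zero hXn)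
    have H1 := h1 i 0
    rw [e1, nuInf_eq _ hx1,
      RatFunc.intDegree_mul ha hXn, intDegree_pow_X] at H1
    have H1' : L ≤ -(a.intDegree + n) := by exact_mod_cast H1
    have H2 := h2 i 0
    rw [e2, nuZero_eq _ hx2] at H2
    have H2' : L ≤ nzAux (a * (RatFunc.X ^ n)⁻¹) := by exact_mod_cast H2
    rw [nzAux_mul ha (inv_ne_zero hXn), nzAux_inv, nzAux_pow] at H2'
    have key : nzAux a ≤ a.intDegree := by
      rw [haa, entry i 0] at ha ⊢
      exact nzAux_le_intDegree _ ha
    omega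
  have hdet : (M : SL(2, RatFunc F)).1.det = 1 := M.2
  rw [Matrix.det_fin_two, col0 0, col0 1] at hdet
  simp at hdet
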